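/- Let x and y be finite floating-point numbers such that x·y > 0, |y| ≥ |x|, and the least significant mantissa bit of y is zero (i.e., the coefficient of 2^{-p} in y's mantissa vanishes). Then there exists a finite floating-point number b with |b| ≤ |y| such that the rounded sum b ⊕ x equals y exactly. -/

import Mathlib

open Real Set

namespace FPPaper

def emin (q : ℕ) : ℤ := -(2:ℤ)^(q-1) + 2
def emax (q : ℕ) : ℤ := (2:ℤ)^(q-1) - 1

/-- The set of finite floating-point numbers with `p` mantissa bits and `q` exponent bits. -/
def Fset (p q : ℕ) : Set ℝ :=
  {x | ∃ (s : ℝ) (i : ℕ) (e : ℤ), (s = 1 ∨ s = -1) ∧ i ≤ 2^p - 1 ∧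
    ((emin q ≤ e ∧ e ≤ emax q ∧ x = s * (1 + (i : ℝ) / 2^p) * (2:ℝ)^e) ∨
     x = s * ((i : ℝ) / 2^p) * (2:ℝ)^(emin q))}

/-- `x` is an even float: the mantissa integer `i` in its representation is even. -/
def EvenFP (p q : ℕ) (x : ℝ) : Prop :=
  ∃ (s : ℝ) (i : ℕ) (e : ℤ), (s = 1 ∨ s = -1) ∧ i ≤ 2^p - 1 ∧ 2 ∣ i ∧
    ((emin q ≤ e ∧ e ≤ emax q ∧ x = s * (1 + (i : ℝ) / 2^p) * (2:ℝ)^e) ∨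
     x = s * ((i : ℝ) / 2^p) * (2:ℝ)^(emin q))

/-- `rnd` is correct round-to-nearest with ties to even, into `Fset p q`. -/
def RoundNE (p q : ℕ) (rnd : ℝ → ℝ) : Prop :=
  ∀ x : ℝ,
    rnd x ∈ Fset p q ∧
    (∀ y ∈ Fset p q, |x - rnd x| ≤ |x - y|) ∧
    (∀ y ∈ Fset p q, y ≠ rnd x → |x - y| = |x - rnd x| → EvenFP p q (rnd x))

/-- `y` is the successor of `x` in `Fset p q`. -/
def IsSucc (p q : ℕ) (x y : ℝ) : Prop :=
  y ∈ Fset p q ∧ x < y ∧ ∀ z ∈ Fset p q, x < z → y ≤ z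

/-- `e` is the binary exponent of the float `x`. -/
def HasExp (p q : ℕ) (x : ℝ) (e : ℤ) : Prop :=
  ((2:ℝ)^(emin q) ≤ |x| ∧ emin q ≤ e ∧ e ≤ emax q ∧ (2:ℝ)^e ≤ |x| ∧ |x| < (2:ℝ)^(e+1)) ∨
  (|x| < (2:ℝ)^(emin q) ∧ e = emin q)

/-- Left-associated iterated rounded sum `0 ⊕ v ⊕ v ⊕ ⋯ ⊕ v` (`n` terms of `v`). -/
def iterAdd (rnd : ℝ → ℝ) (v : ℝ) : ℕ → ℝ
  | 0 => 0
  | n+1 => rnd (iterAdd rnd v n + v)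

/-- Left-associated iterated rounded product of `x` by `w`, `n` times. -/
def iterMul (rnd : ℝ → ℝ) (w : ℝ) (x : ℝ) : ℕ → ℝ
  | 0 => x
  | n+1 => rnd (iterMul rnd w x n * w)

lemma two_zpow_pos (e : ℤ) : (0:ℝ) < 2 ^ e := zpow_pos (by norm_num) e

lemma two_zpow_lt {a b : ℤ} : (2:ℝ)^a < 2^b ↔ a < b := by
  exact zpow_lt_zpow_iff_right₀ (by norm_num)

lemma two_zpow_le {a b : ℤ} : (2:ℝ)^a ≤ 2^b ↔ a ≤ b := by
  exact zpow_le_zpow_iff_right₀ (by norm_num)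

lemma norm_eq (p : ℕ) (i : ℕ) (e : ℤ) :
    (1 + (i:ℝ)/2^p) * (2:ℝ)^e = ((2^p + i : ℕ) : ℝ) * (2:ℝ)^(e - (p:ℤ)) := by
  rw [zpow_sub₀ (by norm_num)]
  have h : ((2:ℝ)^(p:ℤ)) = (2:ℝ)^(p:ℕ) := zpow_natCast 2 p
  rw [h]
  push_cast
  field_simp

lemma sub_eq (p q : ℕ) (i : ℕ) :
    ((i:ℝ)/2^p) * (2:ℝ)^(emin q) = (i : ℝ) * (2:ℝ)^(emin q - (p:ℤ)) := by
  rw [zpow_sub₀ (by norm_num)]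
  have h : ((2:ℝ)^(p:ℤ)) = (2:ℝ)^(p:ℕ) := zpow_natCast 2 p
  rw [h]; ring

lemma zero_mem (p q : ℕ) : (0:ℝ) ∈ Fset p q := by
  refine ⟨1, 0, emin q, Or.inl rfl, by simp, Or.inr ?_⟩; simp

lemma neg_mem {p q : ℕ} {x : ℝ} (hx : x ∈ Fset p q) : -x ∈ Fset p q := by
  obtain ⟨s, i, e, hs, hi, h⟩ := hx
  refine ⟨-s, i, e, ?_, hi, ?_⟩
  · rcases hs with h | h <;> simp [h]
  · rcases h with ⟨h1, h2, h3⟩ | h3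
    · exact Or.inl ⟨h1, h2, by rw [h3]; ring⟩
    · exact Or.inr (by rw [h3]; ring)

lemma neg_even {p q : ℕ} {x : ℝ} (hx : EvenFP p q x) : EvenFP p q (-x) := by
  obtain ⟨s, i, e, hs, hi, hd, h⟩ := hx
  refine ⟨-s, i, e, ?_, hi, hd, ?_⟩
  · rcases hs with h | h <;> simp [h]
  · rcases h with ⟨h1, h2, h3⟩ | h3
    · exact Or.inl ⟨h1, h2, by rw [h3]; ring⟩
    · exact Or.inr (by rw [h3]; ring)

lemma neg_roundNE {p q : ℕ} {rnd : ℝ → ℝ} (h : RoundNE p q rnd) :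
    RoundNE p q (fun z => -rnd (-z)) := by
  intro x
  obtain ⟨h1, h2, h3⟩ := h (-x)
  refine ⟨neg_mem h1, ?_, ?_⟩
  · intro y hy
    have := h2 (-y) (neg_mem hy)
    calc |x - -rnd (-x)| = |(-x) - rnd (-x)| := by rw [abs_sub_comm]; ring_nf
      _ ≤ |(-x) - (-y)| := this
      _ = |x - y| := by rw [abs_sub_comm]; ring_nf
  · intro y hy hne heq
    have := h3 (-y) (neg_mem hy) (by intro hc; apply hne; rw [← neg_neg y, hc]) ?_
    · exact neg_even this
    · calc |(-x) - (-y)| = |x - y| := by rw [abs_sub_comm]; ring_nf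
        _ = |x - -rnd (-x)| := heq
        _ = |(-x) - rnd (-x)| := by rw [abs_sub_comm]; ring_nf


lemma zsplit (p : ℕ) {E e : ℤ} (h : E ≤ e) :
    (2:ℝ)^(e-(p:ℤ)) = (2:ℝ)^((e-E).toNat) * 2^(E-(p:ℤ)) := by
  rw [← zpow_natCast (2:ℝ) (e-E).toNat, Int.toNat_of_nonneg (by omega), ← zpow_add₀ (by norm_num)]
  congr 1; ring

lemma sabs {s a : ℝ} (hs : s = 1 ∨ s = -1) : |s * a| = |a| := by
  rcases hs with h | h <;> simp [h, abs_mul]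

lemma emin_lt_emax {q : ℕ} (hq : 4 ≤ q) : emin q < emax q := by
  have : (2:ℤ)^3 ≤ 2^(q-1) := pow_le_pow_right₀ (by norm_num) (by omega)
  unfold emin emax; omega

lemma small_grid {p q : ℕ} (e : ℤ) (he : emin q ≤ e) :
    e ≤ emax q → ∀ j : ℕ, j < 2^p →
    ((j:ℝ) * (2:ℝ)^(e - (p:ℤ)) ∈ Fset p q) := by
  refine Int.le_induction (motive := fun n _ => n ≤ emax q → ∀ j : ℕ, j < 2^p →
      ((j:ℝ) * (2:ℝ)^(n - (p:ℤ)) ∈ Fset p q)) ?_ ?_ e he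
  · intro _ j hj
    exact ⟨1, j, emin q, Or.inl rfl, by omega, Or.inr (by rw [one_mul, sub_eq])⟩
  · intro e he ih hle j hj
    have key : (j:ℝ) * (2:ℝ)^(e + 1 - (p:ℤ)) = ((2*j : ℕ):ℝ) * (2:ℝ)^(e - (p:ℤ)) := by
      push_cast
      rw [show e + 1 - (p:ℤ) = (e - p) + 1 by ring, zpow_add₀ (by norm_num)]
      ring
    rw [key]
    rcases lt_or_ge (2*j) (2^p) with h | h
    · exact ih (by omega) (2*j) h
    · refine ⟨1, 2*j - 2^p, e, Or.inl rfl, by omega, Or.inl ⟨he, by omega, ?_⟩⟩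
      rw [one_mul, norm_eq]
      congr 2
      omega

lemma grid_mem {p q : ℕ} {e : ℤ} (he1 : emin q ≤ e) (he2 : e ≤ emax q)
    {j : ℕ} (hj : j ≤ 2^(p+1) - 1) : ((j:ℝ) * (2:ℝ)^(e - (p:ℤ)) ∈ Fset p q) := by
  rcases lt_or_ge j (2^p) with h | h
  · exact small_grid e he1 he2 j h
  · refine ⟨1, j - 2^p, e, Or.inl rfl, by simp [pow_succ] at hj; omega, Or.inl ⟨he1, he2, ?_⟩⟩
    rw [one_mul, norm_eq]
    congr 2
    omega

lemma max_bound {p q : ℕ} {x : ℝ} (hx : x ∈ Fset p q) (hq : 4 ≤ q) :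
    |x| < (2:ℝ)^(emax q + 1) := by
  obtain ⟨s, i, e, hs, hi, h⟩ := hx
  have hip : (i:ℝ) < 2^p := by
    have h1 : (1:ℕ) ≤ 2^p := Nat.one_le_two_pow
    exact_mod_cast (show i < 2^p by omega)
  have h2p : (0:ℝ) < 2^p := by positivity
  rcases h with ⟨h1, h2, h3⟩ | h3
  · rw [h3, mul_assoc, sabs hs, abs_of_nonneg (by positivity)]
    calc (1 + (i:ℝ)/2^p) * 2^e < 2 * 2^e := by
          apply mul_lt_mul_of_pos_right _ (two_zpow_pos e)
          have : (i:ℝ)/2^p < 1 := (div_lt_one h2p).2 hip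
          linarith
      _ = 2^(e+1) := by rw [zpow_add₀ (by norm_num)]; ring
      _ ≤ 2^(emax q + 1) := two_zpow_le.2 (by omega)
  · rw [h3, mul_assoc, sabs hs, abs_of_nonneg (by positivity)]
    have : ((i:ℝ)/2^p) * 2^(emin q) < 1 * 2^(emin q) := by
      apply mul_lt_mul_of_pos_right _ (two_zpow_pos _)
      exact (div_lt_one h2p).2 hip
    have h4 : (2:ℝ)^(emin q) ≤ 2^(emax q + 1) := two_zpow_le.2 (by linarith [emin_lt_emax hq])
    linarith

lemma binade {p q : ℕ} {x : ℝ} (hx : x ∈ Fset p q) (hlow : (2:ℝ)^(emin q) ≤ x) :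
    ∃ (e : ℤ) (i : ℕ), emin q ≤ e ∧ e ≤ emax q ∧ i ≤ 2^p - 1 ∧
      x = ((2^p + i : ℕ):ℝ) * 2^(e - (p:ℤ)) ∧ (2:ℝ)^e ≤ x ∧ x < 2^(e+1) := by
  obtain ⟨s, i, e, hs, hi, h⟩ := hx
  have h2p : (0:ℝ) < 2^p := by positivity
  have hip : (i:ℝ) < 2^p := by
    have h1 : (1:ℕ) ≤ 2^p := Nat.one_le_two_pow
    exact_mod_cast (show i < 2^p by omega)
  have hxpos : 0 < x := lt_of_lt_of_le (two_zpow_pos _) hlow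
  rcases h with ⟨h1, h2, h3⟩ | h3
  · have hs1 : s = 1 := by
      rcases hs with h | h
      · exact h
      · exfalso
        rw [h3, h] at hxpos
        nlinarith [two_zpow_pos e, div_nonneg (Nat.cast_nonneg i : (0:ℝ) ≤ i) h2p.le]
    rw [hs1, one_mul] at h3
    have hc1 : (1:ℝ) ≤ 1 + (i:ℝ)/2^p := by
      have := div_nonneg (Nat.cast_nonneg i : (0:ℝ) ≤ (i:ℝ)) h2p.le
      linarith
    have hc2 : 1 + (i:ℝ)/2^p < 2 := by
      have : (i:ℝ)/2^p < 1 := (div_lt_one h2p).2 hip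
      linarith
    refine ⟨e, i, h1, h2, hi, by rw [h3, norm_eq], ?_, ?_⟩
    · rw [h3]; nlinarith [two_zpow_pos e]
    · rw [h3, zpow_add₀ (by norm_num : (2:ℝ) ≠ 0) e 1]
      nlinarith [two_zpow_pos e]
  · exfalso
    have : |x| < 2^(emin q) := by
      rw [h3, mul_assoc, sabs hs, abs_of_nonneg (by positivity)]
      calc ((i:ℝ)/2^p) * 2^(emin q) < 1 * 2^(emin q) := by
            apply mul_lt_mul_of_pos_right _ (two_zpow_pos _)
            exact (div_lt_one h2p).2 hip
        _ = 2^(emin q) := one_mul _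
    rw [abs_of_pos hxpos] at this
    linarith


lemma even_binade {p q : ℕ} {x : ℝ} (hx : EvenFP p q x) (hlow : (2:ℝ)^(emin q) ≤ x) :
    ∃ (e : ℤ) (i : ℕ), emin q ≤ e ∧ e ≤ emax q ∧ i ≤ 2^p - 1 ∧ 2 ∣ i ∧
      x = ((2^p + i : ℕ):ℝ) * 2^(e - (p:ℤ)) ∧ (2:ℝ)^e ≤ x ∧ x < 2^(e+1) := by
  obtain ⟨s, i, e, hs, hi, hd, h⟩ := hx
  have h2p : (0:ℝ) < 2^p := by positivity
  have hip : (i:ℝ) < 2^p := by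
    have h1 : (1:ℕ) ≤ 2^p := Nat.one_le_two_pow
    exact_mod_cast (show i < 2^p by omega)
  have hxpos : 0 < x := lt_of_lt_of_le (two_zpow_pos _) hlow
  rcases h with ⟨h1, h2, h3⟩ | h3
  · have hs1 : s = 1 := by
      rcases hs with h | h
      · exact h
      · exfalso
        rw [h3, h] at hxpos
        nlinarith [two_zpow_pos e, div_nonneg (Nat.cast_nonneg i : (0:ℝ) ≤ (i:ℝ)) h2p.le]
    rw [hs1, one_mul] at h3
    have hc1 : (1:ℝ) ≤ 1 + (i:ℝ)/2^p := by
      have := div_nonneg (Nat.cast_nonneg i : (0:ℝ) ≤ (i:ℝ)) h2p.le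
      linarith
    have hc2 : 1 + (i:ℝ)/2^p < 2 := by
      have : (i:ℝ)/2^p < 1 := (div_lt_one h2p).2 hip
      linarith
    refine ⟨e, i, h1, h2, hi, hd, by rw [h3, norm_eq], ?_, ?_⟩
    · rw [h3]; nlinarith [two_zpow_pos e]
    · rw [h3, zpow_add₀ (by norm_num : (2:ℝ) ≠ 0) e 1]
      nlinarith [two_zpow_pos e]
  · exfalso
    have : |x| < 2^(emin q) := by
      rw [h3, mul_assoc, sabs hs, abs_of_nonneg (by positivity)]
      calc ((i:ℝ)/2^p) * 2^(emin q) < 1 * 2^(emin q) := by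
            apply mul_lt_mul_of_pos_right _ (two_zpow_pos _)
            exact (div_lt_one h2p).2 hip
        _ = 2^(emin q) := one_mul _
    rw [abs_of_pos hxpos] at this
    linarith

lemma pos_grid {p q : ℕ} {x : ℝ} (hx : x ∈ Fset p q) {E : ℤ} (hE : emin q ≤ E)
    (hge : (2:ℝ)^E ≤ x) : ∃ k : ℤ, x = (k:ℝ) * 2^(E - (p:ℤ)) := by
  obtain ⟨e, i, he1, he2, hi, hrep, hlo, hhi⟩ :=
    binade hx (le_trans (two_zpow_le.2 hE) hge)
  have hEe : E ≤ e := by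
    have : (2:ℝ)^E < 2^(e+1) := lt_of_le_of_lt hge hhi
    have := two_zpow_lt.1 this
    omega
  refine ⟨((2^p + i : ℕ) : ℤ) * 2^((e-E).toNat), ?_⟩
  rw [hrep, zsplit p hEe]
  push_cast
  ring

lemma even_grid {p q : ℕ} {x : ℝ} (hp : 1 ≤ p) (hx : EvenFP p q x) {E : ℤ} (hE : emin q ≤ E)
    (hge : (2:ℝ)^E ≤ x) : ∃ m : ℤ, x = 2 * (m:ℝ) * 2^(E - (p:ℤ)) := by
  obtain ⟨e, i, he1, he2, hi, hd, hrep, hlo, hhi⟩ :=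
    even_binade hx (le_trans (two_zpow_le.2 hE) hge)
  have hEe : E ≤ e := by
    have : (2:ℝ)^E < 2^(e+1) := lt_of_le_of_lt hge hhi
    have := two_zpow_lt.1 this
    omega
  obtain ⟨i', hi'⟩ := hd
  have hsp : 2^p = 2 * 2^(p-1) := by
    rw [← pow_succ']
    congr 1
    omega
  refine ⟨((2^(p-1) + i' : ℕ) : ℤ) * 2^((e-E).toNat), ?_⟩
  rw [hrep, zsplit p hEe]
  have : ((2^p + i : ℕ):ℝ) = 2 * ((2^(p-1) + i' : ℕ):ℝ) := by
    rw [show (2:ℝ) * ((2^(p-1) + i' : ℕ):ℝ) = ((2*(2^(p-1) + i') : ℕ):ℝ) by push_cast; ring]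
    congr 1
    omega
  rw [this]
  push_cast
  ring

lemma eta_grid {p q : ℕ} {x : ℝ} (hx : x ∈ Fset p q) :
    ∃ k : ℤ, x = (k:ℝ) * 2^(emin q - (p:ℤ)) := by
  obtain ⟨s, i, e, hs, hi, h⟩ := hx
  rcases h with ⟨h1, h2, h3⟩ | h3 <;> rcases hs with h | h
  · exact ⟨((2^p + i : ℕ) : ℤ) * 2^((e - emin q).toNat),
      by rw [h3, h, mul_assoc, norm_eq, zsplit p h1]; push_cast; ring⟩
  · exact ⟨-(((2^p + i : ℕ) : ℤ) * 2^((e - emin q).toNat)),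
      by rw [h3, h, mul_assoc, norm_eq, zsplit p h1]; push_cast; ring⟩
  · exact ⟨(i : ℤ), by rw [h3, h, mul_assoc, sub_eq]; push_cast; ring⟩
  · exact ⟨-(i : ℤ), by rw [h3, h, mul_assoc, sub_eq]; push_cast; ring⟩

lemma even_eta {p q : ℕ} {x : ℝ} (hp : 1 ≤ p) (hx : EvenFP p q x) :
    ∃ m : ℤ, x = 2 * (m:ℝ) * 2^(emin q - (p:ℤ)) := by
  obtain ⟨s, i, e, hs, hi, hd, h⟩ := hx
  obtain ⟨i', hi'⟩ := hd
  have hkey : ((2^p + i : ℕ):ℝ) = 2 * ((2^(p-1) + i' : ℕ):ℝ) := by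
    rw [show (2:ℝ) * ((2^(p-1) + i' : ℕ):ℝ) = ((2*(2^(p-1) + i') : ℕ):ℝ) by push_cast; ring]
    congr 1
    have hsp : 2^p = 2 * 2^(p-1) := by
      rw [← pow_succ']
      congr 1
      omega
    omega
  rcases h with ⟨h1, h2, h3⟩ | h3 <;> rcases hs with h | h
  · exact ⟨((2^(p-1) + i' : ℕ) : ℤ) * 2^((e - emin q).toNat),
      by rw [h3, h, mul_assoc, norm_eq, zsplit p h1, hkey]; push_cast; ring⟩
  · exact ⟨-(((2^(p-1) + i' : ℕ) : ℤ) * 2^((e - emin q).toNat)),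
      by rw [h3, h, mul_assoc, norm_eq, zsplit p h1, hkey]; push_cast; ring⟩
  · exact ⟨(i' : ℤ), by rw [h3, h, mul_assoc, sub_eq, hi']; push_cast; ring⟩
  · exact ⟨-(i' : ℤ), by rw [h3, h, mul_assoc, sub_eq, hi']; push_cast; ring⟩


lemma rnd_fix {p q : ℕ} {rnd : ℝ → ℝ} (hrnd : RoundNE p q rnd) {y : ℝ}
    (hy : y ∈ Fset p q) : rnd y = y := by
  have h := (hrnd y).2.1 y hy
  simp only [sub_self, abs_zero] at h
  have := abs_nonneg (y - rnd y)
  have h0 : |y - rnd y| = 0 := le_antisymm h this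
  have := abs_eq_zero.1 h0
  linarith

lemma rnd_le {p q : ℕ} {rnd : ℝ → ℝ} (hrnd : RoundNE p q rnd) {t y : ℝ}
    (hy : y ∈ Fset p q) (h : t ≤ y) : rnd t ≤ y := by
  by_contra hc
  push_neg at hc
  have h2 := (hrnd t).2.1 y hy
  have h3 : rnd t - t ≤ |t - rnd t| := by rw [abs_sub_comm]; exact le_abs_self _
  have h4 : |t - y| = y - t := by rw [abs_sub_comm, abs_of_nonneg (by linarith)]
  linarith

lemma rnd_nonneg {p q : ℕ} {rnd : ℝ → ℝ} (hrnd : RoundNE p q rnd) {t : ℝ}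
    (h : 0 ≤ t) : 0 ≤ rnd t := by
  by_contra hc
  push_neg at hc
  have h2 := (hrnd t).2.1 0 (zero_mem p q)
  have h3 : t - rnd t ≤ |t - rnd t| := le_abs_self _
  rw [sub_zero, abs_of_nonneg h] at h2
  linarith

lemma err_bound {p q : ℕ} {rnd : ℝ → ℝ} (hrnd : RoundNE p q rnd) (hq : 4 ≤ q)
    {t y : ℝ} {E K : ℤ}
    (ht0 : 0 ≤ t) (hy : y ∈ Fset p q) (hty : t < y) (hyK : y = (K:ℝ) * 2^(E-(p:ℤ)))
    (hE1 : emin q ≤ E) (hE2 : E ≤ emax q) (htE : t < 2^(E+1)) :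
    |rnd t - t| ≤ 2^(E-(p:ℤ))/2 := by
  set G : ℝ := (2:ℝ)^(E-(p:ℤ)) with hGdef
  have hG : 0 < G := two_zpow_pos _
  set j : ℤ := ⌊t / G⌋ with hjdef
  have hj0 : 0 ≤ j := Int.floor_nonneg.2 (div_nonneg ht0 hG.le)
  have hl : (j:ℝ) * G ≤ t := by
    have := Int.floor_le (t / G)
    calc (j:ℝ) * G ≤ (t/G) * G := by
          apply mul_le_mul_of_nonneg_right this hG.le
      _ = t := by field_simp
  have hh : t < ((j:ℝ)+1) * G := by
    have := Int.lt_floor_add_one (t/G)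
    calc t = (t/G) * G := by field_simp
      _ < ((j:ℝ)+1) * G := by
          apply mul_lt_mul_of_pos_right _ hG
          exact_mod_cast this
  have hjK : (j:ℝ) + 1 ≤ (K:ℝ) := by
    have h1 : (j:ℝ) * G < (K:ℝ) * G := by rw [← hyK]; linarith
    have h2 : (j:ℝ) < K := lt_of_mul_lt_mul_right h1 hG.le
    have : j < K := by exact_mod_cast h2
    exact_mod_cast this
  have hsplit : (2:ℝ)^(E+1) = ((2^(p+1) : ℕ):ℝ) * G := by
    rw [hGdef]
    push_cast
    rw [← zpow_natCast (2:ℝ) (p+1), ← zpow_add₀ (by norm_num : (2:ℝ) ≠ 0)]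
    congr 1
    push_cast
    ring
  have hjbound : j < ((2^(p+1) : ℕ):ℤ) := by
    have h1 : (j:ℝ) * G < ((2^(p+1) : ℕ):ℝ) * G := by rw [← hsplit]; linarith
    have h2 : (j:ℝ) < ((2^(p+1) : ℕ):ℝ) := lt_of_mul_lt_mul_right h1 hG.le
    exact_mod_cast h2
  have hlmem : ((j:ℝ)) * G ∈ Fset p q := by
    have hcast : ((j.toNat : ℕ):ℝ) = (j:ℝ) := by
      have h9 : ((j.toNat : ℤ)) = j := Int.toNat_of_nonneg hj0
      exact_mod_cast h9
    rw [← hcast]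
    exact grid_mem hE1 hE2 (by omega)
  have hhmem : ((j:ℝ)+1) * G ∈ Fset p q := by
    rcases lt_or_ge (j+1) ((2^(p+1) : ℕ):ℤ) with hc | hc
    · have hcast : (((j+1).toNat : ℕ):ℝ) = (j:ℝ)+1 := by
        have h9 : (((j+1).toNat : ℤ)) = j+1 := Int.toNat_of_nonneg (by omega)
        have h8 : (((j+1).toNat : ℕ):ℝ) = ((j+1 : ℤ):ℝ) := by exact_mod_cast h9
        rw [h8]
        push_cast
        ring
      rw [← hcast]
      exact grid_mem hE1 hE2 (by omega)
    · have hj1 : j + 1 = ((2^(p+1) : ℕ):ℤ) := by omega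
      have hval : ((j:ℝ)+1) * G = (2:ℝ)^(E+1) := by
        rw [hsplit]
        congr 1
        exact_mod_cast hj1
      have hyb : (2:ℝ)^(E+1) ≤ y := by
        rw [← hval, hyK]
        apply mul_le_mul_of_nonneg_right hjK hG.le
      have hEmax : E + 1 ≤ emax q := by
        have h1 : y ≤ |y| := le_abs_self y
        have h2 := max_bound hy hq
        have h3 : (2:ℝ)^(E+1) < 2^(emax q + 1) := by linarith
        have := two_zpow_lt.1 h3
        omega
      have hval2 : ((j:ℝ)+1) * G = ((2^p : ℕ):ℝ) * (2:ℝ)^(E+1-(p:ℤ)) := by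
        rw [hval]
        push_cast
        rw [← zpow_natCast (2:ℝ) p, ← zpow_add₀ (by norm_num : (2:ℝ) ≠ 0)]
        congr 1
        push_cast
        ring
      rw [hval2]
      exact grid_mem (by omega) hEmax (by have : (1:ℕ) ≤ 2^p := Nat.one_le_two_pow; omega)
  have hb1 : |t - rnd t| ≤ t - (j:ℝ) * G := by
    have h5 := (hrnd t).2.1 _ hlmem
    have h4 : |t - (j:ℝ) * G| = t - (j:ℝ) * G := abs_of_nonneg (by linarith)
    rw [h4] at h5
    exact h5
  have hb2 : |t - rnd t| ≤ ((j:ℝ)+1) * G - t := by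
    have h5 := (hrnd t).2.1 _ hhmem
    have h4 : |t - ((j:ℝ)+1) * G| = ((j:ℝ)+1) * G - t := by
      rw [abs_of_nonpos (by linarith)]
      ring
    rw [h4] at h5
    exact h5
  rw [abs_sub_comm]
  linarith

lemma endgame {p q : ℕ} {rnd : ℝ → ℝ} (hrnd : RoundNE p q rnd) {y δ G : ℝ}
    (hy : y ∈ Fset p q) (hG : 0 < G) (hδ : |δ| ≤ G/2) {M : ℤ}
    (hyM : y = 2 * (M:ℝ) * G)
    (hgrid : ∀ f ∈ Fset p q, |f - (y+δ)| ≤ |δ| → ∃ k : ℤ, f = (k:ℝ) * G)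
    (heven : ∀ f, |f - (y+δ)| ≤ |δ| → EvenFP p q f → ∃ m : ℤ, f = 2 * (m:ℝ) * G) :
    rnd (y + δ) = y := by
  obtain ⟨hmem, hmin, htie⟩ := hrnd (y + δ)
  set r := rnd (y + δ) with hrdef
  have h1 : |y + δ - r| ≤ |δ| := by
    have := hmin y hy
    simpa using this
  have h1' : |r - (y+δ)| ≤ |δ| := by rwa [abs_sub_comm]
  obtain ⟨k, hk⟩ := hgrid r hmem h1'
  have hdiff : |((k:ℝ) - 2*M)| * G ≤ 2 * |δ| := by
    have : y + δ - r = δ - ((k:ℝ) - 2*M) * G := by rw [hk, hyM]; ring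
    rw [this] at h1
    have h2 : |((k:ℝ) - 2*M) * G| - |δ| ≤ |δ - ((k:ℝ) - 2*M) * G| := by
      have := abs_sub_abs_le_abs_sub (((k:ℝ) - 2*M) * G) δ
      rw [abs_sub_comm] at this
      linarith
    rw [abs_mul, abs_of_pos hG] at h2
    linarith
  have hkM : |k - 2*M| ≤ 1 := by
    by_contra hc
    push_neg at hc
    have h2 : (2:ℝ) ≤ |((k:ℝ) - 2*M)| := by
      have hz : (2:ℤ) ≤ |k - 2*M| := by omega
      have h3 : ((k:ℝ)) - 2*M = ((k - 2*M : ℤ):ℝ) := by push_cast; ring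
      rw [h3, ← Int.cast_abs]
      exact_mod_cast hz
    nlinarith
  have hkM2 := abs_le.1 hkM
  rcases eq_or_ne k (2*M) with he | hne
  · rw [hk, he, hyM]; push_cast; ring
  · exfalso
    have hd : k - 2*M = 1 ∨ k - 2*M = -1 := by omega
    have hry : r ≠ y := by
      intro hc
      rw [hk, hyM] at hc
      have : ((k:ℝ)) = 2*M := by
        field_simp at hc
        linarith
      have : k = 2*M := by exact_mod_cast this
      exact hne this
    have habs : |((k:ℝ) - 2*M)| = 1 := by
      rcases hd with hd | hd <;>
        · have : ((k:ℝ)) - 2*M = ((k - 2*M : ℤ):ℝ) := by push_cast; ring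
          rw [this, hd]
          norm_num
    have hG2 : G ≤ 2 * |δ| := by
      rw [habs, one_mul] at hdiff
      exact hdiff
    have heq : |δ| = G/2 := le_antisymm hδ (by linarith)
    have hdist : |y + δ - y| = |y + δ - r| := by
      have hlow : G - |δ| ≤ |y + δ - r| := by
        have h3 : y + δ - r = δ - ((k:ℝ) - 2*M) * G := by rw [hk, hyM]; ring
        rw [h3]
        have := abs_sub_abs_le_abs_sub (((k:ℝ) - 2*M) * G) δ
        rw [abs_sub_comm] at this
        rw [abs_mul, abs_of_pos hG, habs, one_mul] at this
        linarith
      have : |y + δ - r| = |δ| := le_antisymm h1 (by rw [heq]; linarith)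
      rw [this]
      simp
    have hev := htie y hy (Ne.symm hry) hdist
    obtain ⟨m, hm⟩ := heven r h1' hev
    rw [hk] at hm
    have : (k:ℝ) = 2*m := by
      field_simp at hm
      linarith
    have : k = 2*m := by exact_mod_cast this
    omega


lemma zpow_merge (a : ℕ) (c d : ℤ) (h : (a:ℤ) + d = c) :
    (2:ℝ)^c = ((2^a : ℕ):ℝ) * 2^d := by
  subst h
  push_cast
  rw [← zpow_natCast (2:ℝ) a, ← zpow_add₀ (by norm_num : (2:ℝ) ≠ 0)]

lemma pos_case {p q : ℕ} (hp : 2 ≤ p) (hq : 4 ≤ q) {rnd : ℝ → ℝ} (hrnd : RoundNE p q rnd)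
    {x y : ℝ} (hx : x ∈ Fset p q) (hy : y ∈ Fset p q) (hx0 : 0 < x) (hxy : x ≤ y)
    (heven : EvenFP p q y) :
    ∃ b ∈ Fset p q, |b| ≤ |y| ∧ rnd (b + x) = y := by
  have hp1 : 1 ≤ p := by omega
  set t : ℝ := y - x with htdef
  have ht0 : 0 ≤ t := by simp [htdef]; linarith
  have hty : t < y := by simp [htdef]; linarith
  have hy0 : 0 < y := lt_of_lt_of_le hx0 hxy
  set b : ℝ := rnd t with hbdef
  have hbmem : b ∈ Fset p q := (hrnd t).1
  have hble : b ≤ y := rnd_le hrnd hy (by linarith)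
  have hb0 : 0 ≤ b := rnd_nonneg hrnd ht0
  have habs : |b| ≤ |y| := by rw [abs_of_nonneg hb0, abs_of_pos hy0]; exact hble
  set δ : ℝ := b - t with hddef
  have hsum : b + x = y + δ := by rw [hddef, htdef]; ring
  refine ⟨b, hbmem, habs, ?_⟩
  rw [hsum]
  rcases le_or_gt y ((2:ℝ)^(emin q)) with hsmall | hbig
  · -- small case: grid η
    obtain ⟨K, hyK⟩ := eta_grid hy
    have hδ : |δ| ≤ 2^(emin q - (p:ℤ))/2 :=
      err_bound hrnd hq ht0 hy hty hyK le_rfl (emin_lt_emax hq).le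
        (lt_of_lt_of_le hty (le_trans hsmall (two_zpow_le.2 (by omega))))
    obtain ⟨M, hyM⟩ := even_eta hp1 heven
    exact endgame hrnd hy (two_zpow_pos _) hδ hyM
      (fun f hf _ => eta_grid hf)
      (fun f _ hfe => even_eta hp1 hfe)
  · obtain ⟨e, i, he1, he2, hi, hrep, hlo, hhi⟩ := binade hy hbig.le
    have hG : ∀ d : ℤ, (0:ℝ) < 2^d := two_zpow_pos
    rcases Nat.eq_zero_or_pos i with hi0 | hip
    · -- y = 2^e, power of two
      have hye : y = (2:ℝ)^e := by
        rw [hrep, hi0]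
        rw [show (2:ℝ)^e = ((2^p : ℕ):ℝ) * 2^(e - (p:ℤ)) from zpow_merge p e _ (by ring)]
        norm_num
      have hee : emin q < e := by
        have : (2:ℝ)^(emin q) < 2^e := by rw [← hye]; exact hbig
        exact two_zpow_lt.1 this
      have hE1 : emin q ≤ e - 1 := by omega
      have hE2 : e - 1 ≤ emax q := by omega
      have hyK : y = (((2^(p+1) : ℕ) : ℤ):ℝ) * 2^((e-1) - (p:ℤ)) := by
        rw [hye, zpow_merge (p+1) e ((e-1)-(p:ℤ)) (by push_cast; ring)]
        norm_num
      have htE : t < 2^((e-1) + 1) := by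
        rw [show (e-1)+1 = e by ring, ← hye]
        exact hty
      have hδ : |δ| ≤ 2^((e-1) - (p:ℤ))/2 :=
        err_bound hrnd hq ht0 hy hty hyK hE1 hE2 htE
      have hyM : y = 2 * (((2^p : ℕ):ℤ):ℝ) * 2^((e-1) - (p:ℤ)) := by
        rw [hyK]
        push_cast
        ring
      have hwin : ∀ f : ℝ, |f - (y+δ)| ≤ |δ| → (2:ℝ)^(e-1) ≤ f := by
        intro f hf
        have h1 : (y+δ) - f ≤ |f - (y+δ)| := by
          rw [abs_sub_comm]
          exact le_abs_self _
        have h2 : -|δ| ≤ δ := neg_abs_le δ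
        have h3 : y - 2^((e-1)-(p:ℤ)) ≤ f := by
          have := abs_nonneg δ
          linarith [hδ, h1, h2]
        have h4 : (2:ℝ)^(e-1) + 2^((e-1)-(p:ℤ)) ≤ y := by
          rw [hye, show (2:ℝ)^e = 2^(e-1) * 2^(1:ℤ) by
            rw [← zpow_add₀ (by norm_num : (2:ℝ) ≠ 0)]; congr 1; ring]
          have : (2:ℝ)^((e-1)-(p:ℤ)) ≤ 2^(e-1) := two_zpow_le.2 (by omega)
          nlinarith [hG (e-1)]
        linarith
      exact endgame hrnd hy (hG _) hδ hyM
        (fun f hf hfw => pos_grid hf hE1 (hwin f hfw))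
        (fun f hfw hfe => even_grid hp1 hfe hE1 (hwin f hfw))
    · -- generic binade, i ≥ 1
      have hyK : y = (((2^p + i : ℕ) : ℤ):ℝ) * 2^(e - (p:ℤ)) := by
        rw [hrep]; push_cast; ring
      have hδ : |δ| ≤ 2^(e - (p:ℤ))/2 :=
        err_bound hrnd hq ht0 hy hty hyK he1 he2 (lt_trans hty hhi)
      obtain ⟨M, hyM⟩ := even_grid hp1 heven he1 hlo
      have hwin : ∀ f : ℝ, |f - (y+δ)| ≤ |δ| → (2:ℝ)^e ≤ f := by
        intro f hf
        have h1 : (y+δ) - f ≤ |f - (y+δ)| := by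
          rw [abs_sub_comm]
          exact le_abs_self _
        have h2 : -|δ| ≤ δ := neg_abs_le δ
        have h3 : y - 2^(e-(p:ℤ)) ≤ f := by
          have := abs_nonneg δ
          linarith [hδ, h1, h2]
        have h4 : (2:ℝ)^e + 2^(e-(p:ℤ)) ≤ y := by
          rw [hyK, show (2:ℝ)^e = ((2^p : ℕ):ℝ) * 2^(e - (p:ℤ)) from zpow_merge p e _ (by ring)]
          have hcast : ((2^p : ℕ):ℝ) + 1 ≤ (((2^p + i : ℕ) : ℤ):ℝ) := by
            push_cast
            have : (1:ℝ) ≤ (i:ℝ) := by exact_mod_cast hip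
            linarith
          nlinarith [hG (e - (p:ℤ))]
        linarith
      exact endgame hrnd hy (hG _) hδ hyM
        (fun f hf hfw => pos_grid hf he1 (hwin f hfw))
        (fun f hfw hfe => even_grid hp1 hfe he1 (hwin f hfw))

theorem stmt_3 (p q : ℕ) (hp : 2 ≤ p) (hq : 4 ≤ q) (hpq : p ≤ 2^(q-2))
    (rnd : ℝ → ℝ) (hrnd : RoundNE p q rnd)
    (x y : ℝ) (hx : x ∈ Fset p q) (hy : y ∈ Fset p q)
    (hxy : 0 < x * y) (hyx : |x| ≤ |y|) (heven : EvenFP p q y) :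
    ∃ b ∈ Fset p q, |b| ≤ |y| ∧ rnd (b + x) = y := by
  rcases lt_trichotomy x 0 with hneg | h0 | hpos
  · have hy0 : y < 0 := by nlinarith
    obtain ⟨b, hb, hbabs, heq⟩ := pos_case hp hq (neg_roundNE hrnd) (neg_mem hx) (neg_mem hy)
      (by linarith) (by rw [abs_of_neg hneg, abs_of_neg hy0] at hyx; linarith) (neg_even heven)
    have heq2 : rnd (-(b + -x)) = y := by
      have : -rnd (-(b + -x)) = -y := heq
      linarith
    rw [show -(b + -x) = -b + x by ring] at heq2
    refine ⟨-b, neg_mem hb, ?_, heq2⟩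
    rwa [abs_neg, ← abs_neg y]
  · exfalso
    rw [h0] at hxy
    simp at hxy
  · have hy0 : 0 < y := by nlinarith
    exact pos_case hp hq hrnd hx hy hpos
      (by rwa [abs_of_pos hpos, abs_of_pos hy0] at hyx) heven


end FPPaper
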